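/- Let x be a solution of the homogeneous Lotka-Volterra system x_i' = x_i(Σ_j A_{ij}x_j), and let u < v with A_{u,w}=A_{v,w} for w∉{u,v}. Then the edge variable y = x_u/x_v satisfies y' = x_u·((A_{u,u} − A_{v,u})·y − A_{v,v} + A_{u,v}) on any interval where x_v is nonvanishing. -/

import Mathlib

/-- Edge-variable equation: if `x` solves the LV system `x_i' = x_i (Σ_j A_{ij} x_j)`,
rows `u < v` of `A` agree outside columns `u, v`, and `x_v` is nonvanishing on a
set `s`, then `y = x_u / x_v` satisfies
`y' = x_u ((A u u − A v u) y − A v v + A u v)` on `s`. -/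
theorem edge_variable_ode {n : ℕ} (A : Matrix (Fin n) (Fin n) ℝ)
    (x : ℝ → Fin n → ℝ)
    (hx : ∀ i t, HasDerivAt (fun s => x s i) (x t i * ∑ j, A i j * x t j) t)
    (u v : Fin n) (huv : u < v)
    (hrow : ∀ w, w ≠ u → w ≠ v → A u w = A v w)
    (s : Set ℝ) (hs : ∀ t ∈ s, x t v ≠ 0) :
    ∀ t ∈ s, HasDerivAt (fun r => x r u / x r v)
      (x t u * ((A u u - A v u) * (x t u / x t v) - A v v + A u v)) t := by
  intro t ht
  have hv := hs t ht
  have h := (hx u t).div (hx v t) hv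
  convert h using 1
  · rfl
  · rfl
  · rfl
  have hsum : ∑ j, (A u j - A v j) * x t j
      = (A u u - A v u) * x t u + (A u v - A v v) * x t v := by
    rw [← Finset.sum_subset (Finset.subset_univ ({u, v} : Finset (Fin n)))]
    · rw [Finset.sum_pair huv.ne]
    · intro j _ hj
      simp only [Finset.mem_insert, Finset.mem_singleton, not_or] at hj
      rw [hrow j hj.1 hj.2]; ring
  have expand : (∑ j, A u j * x t j) - (∑ j, A v j * x t j)
      = (A u u - A v u) * x t u + (A u v - A v v) * x t v := by
    rw [← hsum, ← Finset.sum_sub_distrib]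
    exact Finset.sum_congr rfl fun j _ => by ring
  field_simp
  linear_combination (-(x t u)) * expand
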